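/- For every real λ > 0 and every integer n ≥ 1, the partial sums of the exponential series satisfy s_{n−1}(λ) · s_{n+1}(λ) > (n/(n+1)) · s_n(λ)². -/

import Mathlib

/-- The `n`-th partial sum of the Taylor series of the exponential function. -/
noncomputable def s (n : ℕ) (a : ℝ) : ℝ :=
  ∑ j ∈ Finset.range (n + 1), a ^ j / (Nat.factorial j : ℝ)

open Finset

lemma fact_aux (d : ℕ) : ∀ k j : ℕ, k ≤ j →
    Nat.factorial j * Nat.factorial (d + k) ≤ Nat.factorial k * Nat.factorial (d + j) := by
  induction d with
  | zero => intro k j h; simpa using Nat.mul_comm _ _ ▸ le_refl _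
  | succ d ih =>
    intro k j h
    calc Nat.factorial j * Nat.factorial (d + 1 + k)
        = (Nat.factorial j * Nat.factorial (d + k)) * (d + k + 1) := by
          rw [show d + 1 + k = (d + k) + 1 by omega, Nat.factorial_succ]; ring
      _ ≤ (Nat.factorial k * Nat.factorial (d + j)) * (d + j + 1) :=
          Nat.mul_le_mul (ih k j h) (by omega)
      _ = Nat.factorial k * Nat.factorial (d + 1 + j) := by
          rw [show d + 1 + j = (d + j) + 1 by omega, Nat.factorial_succ]; ring

lemma pair_aux (a : ℝ) (ha : 0 < a) (k j n : ℕ) (hkj : k ≤ j) (hjn : j ≤ n) :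
    a ^ k / Nat.factorial k * (a ^ n / Nat.factorial n) ≤
      a ^ j / Nat.factorial j * (a ^ (n - j + k) / Nat.factorial (n - j + k)) := by
  have h1 : Nat.factorial j * Nat.factorial (n - j + k) ≤
      Nat.factorial k * Nat.factorial n := by
    have := fact_aux (n - j) k j hkj
    rwa [show n - j + j = n by omega] at this
  have h1' : (Nat.factorial j * Nat.factorial (n - j + k) : ℝ) ≤
      (Nat.factorial k * Nat.factorial n : ℝ) := by exact_mod_cast h1
  rw [div_mul_div_comm, div_mul_div_comm, ← pow_add, ← pow_add,
    show j + (n - j + k) = k + n by omega]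
  have hf1 : (0:ℝ) < (Nat.factorial j : ℝ) * (Nat.factorial (n - j + k) : ℝ) := by
    positivity
  apply div_le_div_of_nonneg_left (by positivity) hf1
  push_cast at h1' ⊢
  exact h1'

theorem stmt_9 (a : ℝ) (ha : 0 < a) (n : ℕ) (hn : 1 ≤ n) :
    s (n - 1) a * s (n + 1) a > ((n : ℝ) / (n + 1 : ℝ)) * (s n a) ^ 2 := by
  set x : ℕ → ℝ := fun j => a ^ j / Nat.factorial j with hxdef
  have hx : ∀ j, 0 < x j := fun j => by positivity
  set P : ℝ := ∑ j ∈ Finset.range n, x j with hP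
  set S : ℝ := ∑ j ∈ Finset.range (n + 1), x j with hS
  have hsP : s (n - 1) a = P := by
    unfold s
    rw [show n - 1 + 1 = n by omega]
  have hsS : s n a = S := rfl
  have hSP : S = P + x n := by rw [hS, Finset.sum_range_succ]
  have hs1 : s (n + 1) a = S + x (n + 1) := by
    unfold s; rw [Finset.sum_range_succ]
  have hPpos : 0 < P := Finset.sum_pos (fun j _ => hx j) (by simp; omega)
  have hSpos : 0 < S := Finset.sum_pos (fun j _ => hx j) (by simp)
  -- key relation: a * x n = (n+1) * x (n+1)
  have hkey : a * x n = ((n : ℝ) + 1) * x (n + 1) := by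
    simp only [hxdef, Nat.factorial_succ, pow_succ]
    have h1 : (Nat.factorial n : ℝ) ≠ 0 := by positivity
    push_cast
    field_simp
  -- main inequality: ∑_{k<n} (n-k) x_k x_n < P * S
  have main : ∑ k ∈ Finset.range n, ((n : ℝ) - k) * (x k * x n) < P * S := by
    have step1 : ∑ k ∈ Finset.range n, ((n : ℝ) - k) * (x k * x n) ≤
        ∑ k ∈ Finset.range n, ∑ j ∈ Finset.Icc k (n - 1), x j * x (n - j + k) := by
      apply Finset.sum_le_sum
      intro k hk
      have hkn : k < n := Finset.mem_range.mp hk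
      have hcard : (Finset.Icc k (n - 1)).card = n - k := by
        rw [Nat.card_Icc]; omega
      have hb := Finset.card_nsmul_le_sum (Finset.Icc k (n - 1))
        (fun j => x j * x (n - j + k)) (x k * x n)
        (fun j hj => by
          rw [Finset.mem_Icc] at hj
          exact pair_aux a ha k j n hj.1 (by omega))
      rw [hcard, nsmul_eq_mul] at hb
      have : ((n : ℝ) - k) = ((n - k : ℕ) : ℝ) := by
        push_cast [Nat.cast_sub (le_of_lt hkn)]; ring
      rw [this]
      exact hb
    have step2 : ∑ k ∈ Finset.range n, ∑ j ∈ Finset.Icc k (n - 1), x j * x (n - j + k) =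
        ∑ j ∈ Finset.range n, ∑ k ∈ Finset.range (j + 1), x j * x (n - j + k) := by
      rw [Finset.sum_comm' (s' := fun j => Finset.range (j + 1)) (t' := Finset.range n)]
      intro k j
      simp only [Finset.mem_range, Finset.mem_Icc]
      omega
    have step3 : ∀ j ∈ Finset.range n,
        ∑ k ∈ Finset.range (j + 1), x j * x (n - j + k) ≤ x j * (S - 1) := by
      intro j hj
      have hjn : j < n := Finset.mem_range.mp hj
      rw [← Finset.mul_sum]
      apply mul_le_mul_of_nonneg_left _ (le_of_lt (hx j))
      have hsplit : S = (∑ i ∈ Finset.range (n - j), x i) +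
          ∑ k ∈ Finset.range (j + 1), x (n - j + k) := by
        rw [hS, show n + 1 = (n - j) + (j + 1) by omega, Finset.sum_range_add]
      have hone : (1 : ℝ) ≤ ∑ i ∈ Finset.range (n - j), x i := by
        have h0 : x 0 = 1 := by simp [hxdef]
        calc (1:ℝ) = x 0 := h0.symm
          _ ≤ ∑ i ∈ Finset.range (n - j), x i :=
            Finset.single_le_sum (fun i _ => le_of_lt (hx i))
              (Finset.mem_range.mpr (by omega))
      linarith
    calc ∑ k ∈ Finset.range n, ((n : ℝ) - k) * (x k * x n)
        ≤ ∑ j ∈ Finset.range n, ∑ k ∈ Finset.range (j + 1), x j * x (n - j + k) := by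
          rw [← step2]; exact step1
      _ ≤ ∑ j ∈ Finset.range n, x j * (S - 1) := Finset.sum_le_sum step3
      _ = P * (S - 1) := by rw [hP, Finset.sum_mul]
      _ < P * S := by nlinarith
  -- rewrite the sum identity: n * x n * S - a * x n * P = ∑_{k<n} (n-k) x_k x_n
  have hid : (n : ℝ) * x n * S - a * x n * P =
      ∑ k ∈ Finset.range n, ((n : ℝ) - k) * (x k * x n) := by
    have e1 : (n : ℝ) * x n * S = ∑ k ∈ Finset.range (n + 1), (n : ℝ) * (x k * x n) := by
      rw [hS, Finset.mul_sum]
      exact Finset.sum_congr rfl fun k _ => by ring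
    have e2 : a * x n * P = ∑ k ∈ Finset.range (n + 1), (k : ℝ) * (x k * x n) := by
      rw [hP, Finset.mul_sum, Finset.sum_range_succ' (fun k => (k : ℝ) * (x k * x n)) n]
      simp only [Nat.cast_zero, zero_mul, add_zero]
      apply Finset.sum_congr rfl
      intro j _
      have : a * x j = ((j : ℝ) + 1) * x (j + 1) := by
        simp only [hxdef, Nat.factorial_succ, pow_succ]
        push_cast
        field_simp
      push_cast
      calc a * x n * x j = (a * x j) * x n := by ring
        _ = (((j:ℝ)+1) * x (j+1)) * x n := by rw [this]
        _ = ((j:ℝ)+1) * (x (j+1) * x n) := by ring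
    rw [e1, e2, ← Finset.sum_sub_distrib, Finset.sum_range_succ]
    simp only [sub_self, zero_mul, add_zero]
    apply Finset.sum_congr rfl; intro k _; ring
  -- assemble
  rw [hsP, hsS, hs1, gt_iff_lt]
  have hn1 : (0:ℝ) < (n : ℝ) + 1 := by positivity
  rw [div_mul_eq_mul_div, div_lt_iff₀ hn1]
  have expand : P * (S + x (n + 1)) * ((n:ℝ) + 1) =
      ((n:ℝ) + 1) * P * S + a * x n * P := by
    linear_combination (-P) * hkey
  have lhs : (n : ℝ) * S ^ 2 = (n:ℝ) * P * S + (n:ℝ) * x n * S := by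
    rw [hSP]; ring
  rw [expand, lhs]
  nlinarith [main, hid]
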